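/- Let Q_a and Q_d be finite nonempty sets of pure plans for a follower (attacker) and a leader (defender), and let u_a, u_d : Q_a x Q_d -> R be utility functions, extended bilinearly to mixed strategies by expectation. Then a strong Stackelberg equilibrium exists: there exist a mixed leader strategy sigma_d* in Delta(Q_d) and a pure follower plan q_a* in Q_a such that q_a* is a best response to sigma_d* (i.e., u_a(q_a*, sigma_d*) >= u_a(q_a, sigma_d*) for all q_a in Q_a), and u_d(q_a*, sigma_d*) >= u_d(q_a, sigma_d) for every sigma_d in Delta(Q_d) and every pure best response q_a to sigma_d. In particular, the bi-level optimization defining the optimal purple teaming defense plan (Definition 6) with optimistic tie-breaking attains its maximum. -/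

import Mathlib

open scoped BigOperators

namespace Stmt9

/-- `σ` lies in the simplex `Δ(Q)`: nonnegative and sums to 1. -/
def InSimplex {Q : Type*} [Fintype Q] (σ : Q → ℝ) : Prop :=
  (∀ q, 0 ≤ σ q) ∧ ∑ q : Q, σ q = 1

/-- Expected utility `u(q_a, σ_d)` of a pure follower plan against a mixed leader plan. -/
noncomputable def eU {Qa Qd : Type*} [Fintype Qd]
    (u : Qa → Qd → ℝ) (qa : Qa) (σd : Qd → ℝ) : ℝ :=
  ∑ qd : Qd, σd qd * u qa qd

/-- A pure follower plan `qa` is a best response to the mixed leader plan `σd`. -/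
def IsBestResponse {Qa Qd : Type*} [Fintype Qd]
    (ua : Qa → Qd → ℝ) (qa : Qa) (σd : Qd → ℝ) : Prop :=
  ∀ qa' : Qa, eU ua qa' σd ≤ eU ua qa σd

/-- Existence of a strong Stackelberg equilibrium: a mixed leader (defender)
strategy `σd⋆` together with a pure follower (attacker) best response `qa⋆` such
that no mixed leader strategy, paired with any pure best response of the follower
to it, gives the leader a higher utility.  In particular the bi-level optimization
defining the optimal purple teaming defense plan (with optimistic tie-breaking)
attains its maximum. -/
theorem strong_stackelberg_exists
    {Qa Qd : Type*} [Fintype Qa] [Nonempty Qa] [Fintype Qd] [Nonempty Qd]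
    (ua ud : Qa → Qd → ℝ) :
    ∃ (σdstar : Qd → ℝ) (qastar : Qa),
      InSimplex σdstar ∧
      IsBestResponse ua qastar σdstar ∧
      (∀ σd : Qd → ℝ, InSimplex σd →
        ∀ qa : Qa, IsBestResponse ua qa σd →
          eU ud qa σd ≤ eU ud qastar σdstar) := by
  classical
  -- the simplex, as a compact set
  set K : Set (Qd → ℝ) := stdSimplex ℝ Qd with hKdef
  have hmemK : ∀ σ : Qd → ℝ, σ ∈ K ↔ InSimplex σ := by
    intro σ; rfl
  have hKc : IsCompact K := isCompact_stdSimplex ℝ Qd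
  have hcont : ∀ (u : Qa → Qd → ℝ) (qa : Qa),
      Continuous fun σ : Qd → ℝ => eU u qa σ := by
    intro u qa
    unfold eU
    exact continuous_finset_sum _ fun qd _ => (continuous_apply qd).mul continuous_const
  have hclosed : ∀ qa : Qa, IsClosed {σ : Qd → ℝ | IsBestResponse ua qa σ} := by
    intro qa
    have h : {σ : Qd → ℝ | IsBestResponse ua qa σ} =
        ⋂ qa' : Qa, {σ : Qd → ℝ | eU ua qa' σ ≤ eU ua qa σ} := by
      ext σ; simp [IsBestResponse, Set.mem_iInter]
    rw [h]
    exact isClosed_iInter fun qa' => isClosed_le (hcont ua qa') (hcont ua qa)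
  -- For each follower plan `qa`, the set of leader strategies it best-responds to
  set Kb : Qa → Set (Qd → ℝ) := fun qa => K ∩ {σ | IsBestResponse ua qa σ} with hKbdef
  have hKbc : ∀ qa, IsCompact (Kb qa) := fun qa => hKc.inter_right (hclosed qa)
  have hmax : ∀ qa : Qa, (Kb qa).Nonempty →
      ∃ σ ∈ Kb qa, ∀ σ' ∈ Kb qa, eU ud qa σ' ≤ eU ud qa σ := by
    intro qa hne
    obtain ⟨σ, hσ, hmaxσ⟩ := (hKbc qa).exists_isMaxOn hne ((hcont ud qa).continuousOn)
    exact ⟨σ, hσ, fun σ' hσ' => hmaxσ hσ'⟩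
  let σc : Qa → (Qd → ℝ) := fun qa =>
    if h : (Kb qa).Nonempty then (hmax qa h).choose else fun _ => 0
  have hσc : ∀ qa (h : (Kb qa).Nonempty),
      σc qa ∈ Kb qa ∧ ∀ σ' ∈ Kb qa, eU ud qa σ' ≤ eU ud qa (σc qa) := by
    intro qa h
    have : σc qa = (hmax qa h).choose := dif_pos h
    rw [this]
    obtain ⟨h1, h2⟩ := (hmax qa h).choose_spec
    exact ⟨h1, h2⟩
  -- the set of plans that are a best response to something
  set S : Finset Qa := Finset.univ.filter (fun qa => (Kb qa).Nonempty) with hSdef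
  have hSne : S.Nonempty := by
    let σ0 : Qd → ℝ := fun _ => (Fintype.card Qd : ℝ)⁻¹
    have hcard : (0 : ℝ) < (Fintype.card Qd : ℝ) := by
      exact_mod_cast Fintype.card_pos
    have hσ0 : σ0 ∈ K := by
      refine ⟨fun q => by positivity, ?_⟩
      simp only [σ0, Finset.sum_const, Finset.card_univ, nsmul_eq_mul]
      field_simp
    obtain ⟨qa0, _, hqa0⟩ := Finset.exists_max_image Finset.univ (fun qa => eU ua qa σ0)
      ⟨Classical.arbitrary Qa, Finset.mem_univ _⟩
    refine ⟨qa0, ?_⟩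
    simp only [hSdef, Finset.mem_filter, Finset.mem_univ, true_and]
    exact ⟨σ0, hσ0, fun qa' => hqa0 qa' (Finset.mem_univ _)⟩
  obtain ⟨qas, hqasS, hqasmax⟩ := Finset.exists_max_image S (fun qa => eU ud qa (σc qa)) hSne
  have hqasne : (Kb qas).Nonempty := by
    simpa [hSdef] using hqasS
  obtain ⟨⟨hσmemK, hσbr⟩, hσmax⟩ := hσc qas hqasne
  refine ⟨σc qas, qas, (hmemK _).mp hσmemK, hσbr, ?_⟩
  intro σd hσd qa hbr
  have hmem : σd ∈ Kb qa := ⟨(hmemK _).mpr hσd, hbr⟩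
  have hqaS : qa ∈ S := by
    simp only [hSdef, Finset.mem_filter, Finset.mem_univ, true_and]
    exact ⟨σd, hmem⟩
  calc eU ud qa σd ≤ eU ud qa (σc qa) := (hσc qa ⟨σd, hmem⟩).2 σd hmem
    _ ≤ eU ud qas (σc qas) := hqasmax qa hqaS

end Stmt9
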